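/- Fix a common integration constant c = c₁ = c₂ with c < −8M³Ĥ. Then the interior quasi-local masses, defined on an interval (2M − δ, 2M) for some δ > 0, and the exterior quasi-local masses on (2M, ∞) match continuously across the event horizon: lim_{r→2M⁻} m_H^int(r) = lim_{r→2M⁺} m_H^ext(r) = M·(1 − c²/(16M⁴) − Ĥc/M − 4M²Ĥ²), and lim_{r→2M⁻} m_BY^int(r) = lim_{r→2M⁺} m_BY^ext(r). -/

import Mathlib

open Real Filter Topology Set

/-- Schwarzschild lapse-type function `f(r) = 1 - 2M/r`. -/
noncomputable def f (M r : ℝ) : ℝ := 1 - 2 * M / r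

/-- `P(r) = Ĥ·r + c/r²`. -/
noncomputable def P (H c r : ℝ) : ℝ := H * r + c / r ^ 2

/-- Exterior CMC slope `h'(r) = P(r)/(f(r)·√(f(r) + P(r)²))` for `r > 2M`. -/
noncomputable def h' (M H c r : ℝ) : ℝ :=
  P H c r / (f M r * Real.sqrt (f M r + (P H c r) ^ 2))

/-- Exterior Hawking mass `m_H^ext(r) = (r/2)(1 − (f⁻¹ − f h'²)⁻¹)`. -/
noncomputable def mHext (M H c r : ℝ) : ℝ :=
  r / 2 * (1 - ((f M r)⁻¹ - f M r * (h' M H c r) ^ 2)⁻¹)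

/-- Exterior Brown–York mass `m_BY^ext(r) = r(1 − (f⁻¹ − f h'²)^(−1/2))`. -/
noncomputable def mBYext (M H c r : ℝ) : ℝ :=
  r * (1 - ((f M r)⁻¹ - f M r * (h' M H c r) ^ 2) ^ (-(1 : ℝ) / 2))

/-- Interior CMC slope `𝔥'(r) = |P(r)|/((2M/r − 1)·√(P(r)² + f(r)))` for `0 < r < 2M`. -/
noncomputable def hInt' (M H c r : ℝ) : ℝ :=
  |P H c r| / ((2 * M / r - 1) * Real.sqrt ((P H c r) ^ 2 + f M r))

/-- Interior Hawking mass `m_H^int(r) = (r/2)(1 − (f⁻¹ − f 𝔥'²)⁻¹)`. -/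
noncomputable def mHint (M H c r : ℝ) : ℝ :=
  r / 2 * (1 - ((f M r)⁻¹ - f M r * (hInt' M H c r) ^ 2)⁻¹)

/-- Interior Brown–York mass `m_BY^int(r) = r(1 − (f⁻¹ − f 𝔥'²)^(−1/2))`. -/
noncomputable def mBYint (M H c r : ℝ) : ℝ :=
  r * (1 - ((f M r)⁻¹ - f M r * (hInt' M H c r) ^ 2) ^ (-(1 : ℝ) / 2))


lemma f_ne_zero {M r : ℝ} (hr : r ≠ 0) (hr2 : r ≠ 2 * M) : f M r ≠ 0 := by
  unfold f
  intro h
  apply hr2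
  field_simp at h
  linarith

lemma ext_key {M H c r : ℝ} (hf : f M r ≠ 0) (hs : 0 < f M r + P H c r ^ 2) :
    (f M r)⁻¹ - f M r * (h' M H c r) ^ 2 = (f M r + P H c r ^ 2)⁻¹ := by
  unfold h'
  have h2 : Real.sqrt (f M r + P H c r ^ 2) ^ 2 = f M r + P H c r ^ 2 := Real.sq_sqrt hs.le
  rw [div_pow, mul_pow, h2]
  have hs' : f M r + P H c r ^ 2 ≠ 0 := ne_of_gt hs
  field_simp
  ring

lemma int_key {M H c r : ℝ} (hf : f M r ≠ 0) (hs : 0 < f M r + P H c r ^ 2) :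
    (f M r)⁻¹ - f M r * (hInt' M H c r) ^ 2 = (f M r + P H c r ^ 2)⁻¹ := by
  unfold hInt'
  have h1 : 2 * M / r - 1 = -(f M r) := by unfold f; ring
  have h2 : Real.sqrt (P H c r ^ 2 + f M r) ^ 2 = f M r + P H c r ^ 2 := by
    rw [Real.sq_sqrt (by linarith : (0:ℝ) ≤ P H c r ^ 2 + f M r), add_comm]
  rw [h1, div_pow, mul_pow, sq_abs, h2]
  have hs' : f M r + P H c r ^ 2 ≠ 0 := ne_of_gt hs
  field_simp
  ring

lemma inv_rpow_neg_half {s : ℝ} (hs : 0 < s) : (s⁻¹ : ℝ) ^ (-(1:ℝ) / 2) = Real.sqrt s := by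
  rw [show (-(1:ℝ) / 2) = -(1/2) by ring, Real.rpow_neg (inv_nonneg.2 hs.le),
    Real.inv_rpow hs.le, inv_inv, Real.sqrt_eq_rpow]

/-- Fix a common integration constant `c = c₁ = c₂` with `c < −8M³Ĥ`. Then the interior
quasi-local masses and the exterior ones match continuously across the event horizon:
`lim_{r→2M⁻} m_H^int(r) = lim_{r→2M⁺} m_H^ext(r) = M(1 − c²/(16M⁴) − Ĥc/M − 4M²Ĥ²)`,
and `lim_{r→2M⁻} m_BY^int(r) = lim_{r→2M⁺} m_BY^ext(r)`. -/
theorem masses_match_across_horizon (M H c : ℝ) (hM : 0 < M)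
    (hc : c < -8 * M ^ 3 * H) :
    (Tendsto (mHint M H c) (𝓝[<] (2 * M))
        (𝓝 (M * (1 - c ^ 2 / (16 * M ^ 4) - H * c / M - 4 * M ^ 2 * H ^ 2))) ∧
      Tendsto (mHext M H c) (𝓝[>] (2 * M))
        (𝓝 (M * (1 - c ^ 2 / (16 * M ^ 4) - H * c / M - 4 * M ^ 2 * H ^ 2)))) ∧
    ∃ L : ℝ, Tendsto (mBYint M H c) (𝓝[<] (2 * M)) (𝓝 L) ∧
      Tendsto (mBYext M H c) (𝓝[>] (2 * M)) (𝓝 L) := by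
  have hM0 : (2 * M) ≠ 0 := by positivity
  have hP0 : P H c (2 * M) < 0 := by
    unfold P
    have h4 : (0:ℝ) < (2 * M) ^ 2 := by positivity
    rw [show H * (2 * M) + c / (2 * M) ^ 2 = (H * (2 * M) * (2 * M) ^ 2 + c) / (2 * M) ^ 2 by
      field_simp]
    apply div_neg_of_neg_of_pos _ h4
    nlinarith
  have hf2M : f M (2 * M) = 0 := by unfold f; field_simp; ring
  have hs0 : 0 < f M (2 * M) + P H c (2 * M) ^ 2 := by
    rw [hf2M]
    have := pow_two_pos_of_ne_zero (ne_of_lt hP0)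
    linarith
  have hsc : ContinuousAt (fun r : ℝ => f M r + P H c r ^ 2) (2 * M) := by
    unfold f P
    exact (continuousAt_const.sub (continuousAt_const.div continuousAt_id hM0)).add
      (((continuousAt_const.mul continuousAt_id).add
        (continuousAt_const.div (continuousAt_id.pow 2) (pow_ne_zero 2 hM0))).pow 2)
  have hev : ∀ᶠ r in 𝓝 (2 * M), 0 < f M r + P H c r ^ 2 :=
    hsc.eventually (eventually_gt_nhds hs0)
  have hIoo1 : Ioo M (2 * M) ∈ 𝓝[<] (2 * M) :=
    Ioo_mem_nhdsLT_of_mem ⟨by linarith, le_rfl⟩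
  have hIoo2 : Ioo (2 * M) (2 * M + 1) ∈ 𝓝[>] (2 * M) :=
    Ioo_mem_nhdsGT_of_mem ⟨le_rfl, by linarith⟩
  -- limit functions
  set g : ℝ → ℝ := fun r => r / 2 * (1 - (f M r + P H c r ^ 2)) with hg
  set b : ℝ → ℝ := fun r => r * (1 - Real.sqrt (f M r + P H c r ^ 2)) with hb
  -- eventual equalities
  have heqHint : ∀ r ∈ Ioo M (2 * M), 0 < f M r + P H c r ^ 2 →
      mHint M H c r = g r ∧ mBYint M H c r = b r := by
    intro r hr hs
    have hf : f M r ≠ 0 :=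
      f_ne_zero (lt_trans hM hr.1).ne' (ne_of_lt hr.2)
    constructor
    · unfold mHint; rw [int_key hf hs, inv_inv]
    · unfold mBYint; rw [int_key hf hs, inv_rpow_neg_half hs]
  have heqHext : ∀ r ∈ Ioo (2 * M) (2 * M + 1), 0 < f M r + P H c r ^ 2 →
      mHext M H c r = g r ∧ mBYext M H c r = b r := by
    intro r hr hs
    have hr0 : (0:ℝ) < r := lt_trans (by positivity) hr.1
    have hf : f M r ≠ 0 := f_ne_zero hr0.ne' (ne_of_gt hr.1)
    constructor
    · unfold mHext; rw [ext_key hf hs, inv_inv]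
    · unfold mBYext; rw [ext_key hf hs, inv_rpow_neg_half hs]
  -- continuity of limit functions
  have hgc : ContinuousAt g (2 * M) :=
    ((continuousAt_id.div continuousAt_const two_ne_zero).mul (continuousAt_const.sub hsc))
  have hbc : ContinuousAt b (2 * M) :=
    (continuousAt_id.mul (continuousAt_const.sub (Real.continuous_sqrt.continuousAt.comp hsc)))
  have hgval : g (2 * M) = M * (1 - c ^ 2 / (16 * M ^ 4) - H * c / M - 4 * M ^ 2 * H ^ 2) := by
    simp only [hg, hf2M, zero_add]
    unfold P
    field_simp
    ring
  refine ⟨⟨?_, ?_⟩, b (2 * M), ?_, ?_⟩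
  · refine Tendsto.congr' ?_ (hgval ▸ hgc.tendsto.mono_left nhdsWithin_le_nhds)
    filter_upwards [hev.filter_mono nhdsWithin_le_nhds, hIoo1] with r hs hr
    exact ((heqHint r hr hs).1).symm
  · refine Tendsto.congr' ?_ (hgval ▸ hgc.tendsto.mono_left nhdsWithin_le_nhds)
    filter_upwards [hev.filter_mono nhdsWithin_le_nhds, hIoo2] with r hs hr
    exact ((heqHext r hr hs).1).symm
  · refine Tendsto.congr' ?_ (hbc.tendsto.mono_left nhdsWithin_le_nhds)
    filter_upwards [hev.filter_mono nhdsWithin_le_nhds, hIoo1] with r hs hr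
    exact ((heqHint r hr hs).2).symm
  · refine Tendsto.congr' ?_ (hbc.tendsto.mono_left nhdsWithin_le_nhds)
    filter_upwards [hev.filter_mono nhdsWithin_le_nhds, hIoo2] with r hs hr
    exact ((heqHext r hr hs).2).symm
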